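/- A forest (a finite simple graph with no cycles) has exactly one κ-equivalence class of acyclic orientations; that is, any two acyclic orientations of a forest are connected by a sequence of source-to-sink operations. -/

import Mathlib

/-- An orientation of a simple graph: a choice of direction for each edge. -/
structure GraphOrientation {V : Type*} (G : SimpleGraph V) where
  dir : V → V → Prop
  consistent : ∀ u v, G.Adj u v ↔ (dir u v ∨ dir v u)
  asymm : ∀ u v, dir u v → ¬ dir v u

/-- An orientation is acyclic if its directed graph has no directed cycle. -/
def GraphOrientation.IsAcyclic {V : Type*} {G : SimpleGraph V} (O : GraphOrientation G) : Prop :=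
  ∀ v, ¬ Relation.TransGen O.dir v v

/-- The type of acyclic orientations of `G`. -/
def AcycGraphOrientation {V : Type*} (G : SimpleGraph V) := {O : GraphOrientation G // O.IsAcyclic}

/-- `Click O O'` holds when `O'` is obtained from `O` by a source-to-sink operation:
reversing all edges incident to some source vertex `v`. -/
def Click {V : Type*} {G : SimpleGraph V} (O O' : GraphOrientation G) : Prop :=
  ∃ v, (∀ u, ¬ O.dir u v) ∧
    ∀ u w, O'.dir u w ↔ (((u = v ∨ w = v) ∧ O.dir w u) ∨ (u ≠ v ∧ w ≠ v ∧ O.dir u w))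

/-- κ(G): the number of equivalence classes of acyclic orientations of `G` under the
equivalence generated by source-to-sink operations. -/
noncomputable def kappa {V : Type*} (G : SimpleGraph V) : ℕ :=
  Nat.card (Quot (fun A B : AcycGraphOrientation G => Click A.1 B.1))

section Aux

variable {V : Type*} {G : SimpleGraph V}

lemma GraphOrientation.ext' {O O' : GraphOrientation G}
    (h : ∀ u v, O.dir u v ↔ O'.dir u v) : O = O' := by
  obtain ⟨d, c, a⟩ := O
  obtain ⟨d', c', a'⟩ := O'
  have hd : d = d' := funext fun u => funext fun v => propext (h u v)
  subst hd
  rfl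

lemma GraphOrientation.adj_of_dir (O : GraphOrientation G) {u v : V}
    (h : O.dir u v) : G.Adj u v := (O.consistent u v).2 (Or.inl h)

lemma GraphOrientation.not_dir_self (O : GraphOrientation G) (v : V) : ¬ O.dir v v :=
  fun h => G.irrefl (O.adj_of_dir h)

/-- Flip all edges crossing the boundary of `S`. -/
def flipO (S : Set V) (O : GraphOrientation G) : GraphOrientation G where
  dir a b := ((a ∈ S ↔ b ∈ S) ∧ O.dir a b) ∨ (¬(a ∈ S ↔ b ∈ S) ∧ O.dir b a)
  consistent u v := by
    have h1 := O.consistent u v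
    by_cases h : u ∈ S ↔ v ∈ S <;> tauto
  asymm u v h := by
    have h1 := O.asymm u v
    have h2 := O.asymm v u
    by_cases hc : u ∈ S ↔ v ∈ S <;> tauto

lemma flipO_dir_same {S : Set V} {O : GraphOrientation G} {a b : V}
    (h : a ∈ S ↔ b ∈ S) : (flipO S O).dir a b ↔ O.dir a b := by
  simp only [flipO]; tauto

lemma flipO_dir_cross {S : Set V} {O : GraphOrientation G} {a b : V}
    (h : ¬(a ∈ S ↔ b ∈ S)) : (flipO S O).dir a b ↔ O.dir b a := by
  simp only [flipO]; tauto

/-- The component of `v` in `G` minus the edge `s(u,v)`. -/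
def Sside (G : SimpleGraph V) (u v : V) : Set V :=
  {w | (G \ SimpleGraph.fromEdgeSet {s(u, v)}).Reachable w v}

lemma mem_Sside_self (u v : V) : v ∈ Sside G u v := SimpleGraph.Reachable.refl v

lemma not_mem_Sside (hG : G.IsAcyclic) {u v : V} (huv : G.Adj u v) : u ∉ Sside G u v := by
  have hb := (SimpleGraph.isAcyclic_iff_forall_adj_isBridge.mp hG) huv
  exact SimpleGraph.isBridge_iff.mp hb

lemma crossAdj (hG : G.IsAcyclic) {u v : V} (huv : G.Adj u v) {a b : V}
    (hadj : G.Adj a b) (ha : a ∈ Sside G u v) (hb : b ∉ Sside G u v) :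
    a = v ∧ b = u := by
  by_cases he : s(a, b) = s(u, v)
  · rcases Sym2.eq_iff.mp he with ⟨rfl, rfl⟩ | ⟨rfl, rfl⟩
    · exact absurd (mem_Sside_self _ _) hb
    · exact ⟨rfl, rfl⟩
  · exfalso
    apply hb
    have hadj' : (G \ SimpleGraph.fromEdgeSet {s(u, v)}).Adj b a := by
      rw [SimpleGraph.sdiff_adj, SimpleGraph.fromEdgeSet_adj]
      refine ⟨hadj.symm, ?_⟩
      rintro ⟨hmem, -⟩
      exact he (by rwa [Set.mem_singleton_iff, Sym2.eq_swap] at hmem)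
    exact hadj'.reachable.trans ha

lemma exists_cross {r : V → V → Prop} {S : Set V} {a b : V}
    (h : Relation.ReflTransGen r a b) (ha : a ∈ S) (hb : b ∉ S) :
    ∃ p q, p ∈ S ∧ q ∉ S ∧ r p q := by
  revert ha
  induction h using Relation.ReflTransGen.head_induction_on with
  | refl => exact fun ha => absurd ha hb
  | @head x c hr _ ih =>
    intro hx
    by_cases hc : c ∈ S
    · exact ih hc
    · exact ⟨x, c, hx, hc, hr⟩

lemma orient_acyclic (hG : G.IsAcyclic) (O : GraphOrientation G) : O.IsAcyclic := by
  intro v hv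
  obtain ⟨x, hvx, hxv⟩ := Relation.TransGen.head'_iff.mp hv
  have hadj : G.Adj v x := O.adj_of_dir hvx
  obtain ⟨p, q, hp, hq, hpq⟩ :=
    exists_cross (S := Sside G v x) hxv (mem_Sside_self v x) (not_mem_Sside hG hadj)
  obtain ⟨rfl, rfl⟩ := crossAdj hG hadj (O.adj_of_dir hpq) hp hq
  exact O.asymm _ _ hvx hpq

lemma exists_source [Finite V] (hG : G.IsAcyclic) (O : GraphOrientation G) {S : Set V}
    (hS : S.Nonempty) (hclosed : ∀ x y, x ∉ S → y ∈ S → ¬ O.dir x y) :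
    ∃ v ∈ S, ∀ u, ¬ O.dir u v := by
  have hacyc := orient_acyclic hG O
  haveI : IsIrrefl V (Relation.TransGen O.dir) := ⟨hacyc⟩
  have hwf := Finite.wellFounded_of_trans_of_irrefl (Relation.TransGen O.dir)
  obtain ⟨v, hvS, hmin⟩ := hwf.has_min S hS
  refine ⟨v, hvS, fun u hu => ?_⟩
  by_cases h : u ∈ S
  · exact hmin u h (Relation.TransGen.single hu)
  · exact hclosed u v h hvS hu

lemma click_flip_single (O : GraphOrientation G) {v : V}
    (hsrc : ∀ u, ¬ O.dir u v) : Click O (flipO {v} O) := by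
  refine ⟨v, hsrc, fun u w => ?_⟩
  have h1 : ¬ O.dir u v := hsrc u
  have h2 : ¬ O.dir w v := hsrc w
  by_cases hu : u = v <;> by_cases hw : w = v
  · rw [flipO_dir_same (show u ∈ ({v} : Set V) ↔ w ∈ ({v} : Set V) by simp [hu, hw])]
    have h3 : ¬ O.dir u w := hw ▸ h1
    have h4 : ¬ O.dir w u := hu ▸ h2
    tauto
  · rw [flipO_dir_cross (show ¬(u ∈ ({v} : Set V) ↔ w ∈ ({v} : Set V)) by simp [hu, hw])]
    tauto
  · rw [flipO_dir_cross (show ¬(u ∈ ({v} : Set V) ↔ w ∈ ({v} : Set V)) by simp [hu, hw])]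
    tauto
  · rw [flipO_dir_same (show u ∈ ({v} : Set V) ↔ w ∈ ({v} : Set V) by simp [hu, hw])]
    tauto

set_option maxHeartbeats 1000000 in
lemma flip_equiv [Finite V] (hG : G.IsAcyclic) :
    ∀ (n : ℕ) (S : Set V) (O : GraphOrientation G), S.ncard = n →
      (∀ x y, x ∉ S → y ∈ S → ¬ O.dir x y) →
      Relation.EqvGen Click O (flipO S O) := by
  intro n
  induction n using Nat.strong_induction_on with
  | _ n ih =>
    intro S O hcard hclosed
    rcases S.eq_empty_or_nonempty with rfl | hne
    · have he : flipO (∅ : Set V) O = O :=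
        GraphOrientation.ext' fun a b => flipO_dir_same (by simp)
      rw [he]
      exact Relation.EqvGen.refl O
    · obtain ⟨v, hvS, hsrc⟩ := exists_source hG O hne hclosed
      have hclick : Click O (flipO {v} O) := click_flip_single O hsrc
      have hcard1 : (S \ {v}).ncard < n := by
        rw [← hcard]
        exact Set.ncard_diff_singleton_lt_of_mem hvS (Set.toFinite S)
      have hclosed1 : ∀ x y, x ∉ S \ {v} → y ∈ S \ {v} → ¬ (flipO {v} O).dir x y := by
        intro x y hx hy hdir
        have hyv : y ≠ v := hy.2
        by_cases hxv : x = v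
        · have : (flipO {v} O).dir x y ↔ O.dir y x :=
            flipO_dir_cross (by simp [hxv, hyv])
          exact hsrc y (hxv ▸ this.mp hdir)
        · have hxS : x ∉ S := fun h => hx ⟨h, hxv⟩
          have : (flipO {v} O).dir x y ↔ O.dir x y := flipO_dir_same (by simp [hxv, hyv])
          exact hclosed x y hxS hy.1 (this.mp hdir)
      have h2 := ih (S \ {v}).ncard hcard1 (S \ {v}) (flipO {v} O) rfl hclosed1
      have hfe : flipO (S \ {v}) (flipO {v} O) = flipO S O := by
        apply GraphOrientation.ext'
        intro a b
        have hd := O.not_dir_self v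
        by_cases hav : a = v <;> by_cases hbv : b = v <;>
          by_cases haS : a ∈ S <;> by_cases hbS : b ∈ S <;>
          simp only [flipO, Set.mem_diff, Set.mem_singleton_iff, hav, hbv, haS, hbS, hvS,
            iff_self, not_true, not_false_iff] <;>
          tauto
      rw [← hfe]
      exact Relation.EqvGen.trans _ _ _ (Relation.EqvGen.rel _ _ hclick) h2

end Aux

theorem kappa_forest {V : Type*} [Fintype V] (G : SimpleGraph V)
    (hG : G.IsAcyclic) : kappa G = 1 := by
  classical
  set R : AcycGraphOrientation G → AcycGraphOrientation G → Prop :=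
    fun A B => Click A.1 B.1 with hR
  -- map from orientations to the quotient
  let qm : GraphOrientation G → Quot R := fun O => Quot.mk R ⟨O, orient_acyclic hG O⟩
  have qm_eq : ∀ (A B : GraphOrientation G), Relation.EqvGen Click A B → qm A = qm B := by
    intro A B h
    induction h with
    | rel a b hab => exact Quot.sound hab
    | refl a => rfl
    | symm a b _ ih => exact ih.symm
    | trans a b c _ _ ih1 ih2 => exact ih1.trans ih2
  -- connectivity by induction on the number of disagreements
  have conn : ∀ (n : ℕ) (A B : GraphOrientation G),
      {p : V × V | A.dir p.1 p.2 ∧ B.dir p.2 p.1}.ncard = n → qm A = qm B := by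
    intro n
    induction n using Nat.strong_induction_on with
    | _ n ih =>
      intro A B hcard
      set D := {p : V × V | A.dir p.1 p.2 ∧ B.dir p.2 p.1} with hD
      rcases D.eq_empty_or_nonempty with hDe | ⟨⟨v, u⟩, hAvu, hBuv⟩
      · have : A = B := by
          apply GraphOrientation.ext'
          intro a b
          constructor
          · intro h
            rcases (B.consistent a b).1 (A.adj_of_dir h) with h' | h'
            · exact h'
            · exact absurd (show (a, b) ∈ D from ⟨h, h'⟩) (by simp [hDe])
          · intro h
            rcases (A.consistent a b).1 (B.adj_of_dir h) with h' | h'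
            · exact h'
            · exact absurd (show (b, a) ∈ D from ⟨h', h⟩) (by simp [hDe])
        rw [this]
      · -- A.dir v u, B.dir u v; flip the component of v in G - uv
        have hadj : G.Adj u v := B.adj_of_dir hBuv
        set S := Sside G u v with hS
        have hvS : v ∈ S := mem_Sside_self u v
        have huS : u ∉ S := not_mem_Sside hG hadj
        have hclosed : ∀ x y, x ∉ S → y ∈ S → ¬ A.dir x y := by
          intro x y hx hy hdir
          obtain ⟨rfl, rfl⟩ := crossAdj hG hadj (A.adj_of_dir hdir).symm hy hx
          exact A.asymm _ _ hAvu hdir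
        set A' := flipO S A with hA'
        have heqv : Relation.EqvGen Click A A' := flip_equiv hG S.ncard S A rfl hclosed
        set D' := {p : V × V | A'.dir p.1 p.2 ∧ B.dir p.2 p.1} with hD'
        have hsub : D' ⊂ D := by
          constructor
          · rintro ⟨a, b⟩ ⟨ha, hb⟩
            by_cases hab : a ∈ S ↔ b ∈ S
            · exact ⟨(flipO_dir_same hab).mp ha, hb⟩
            · exfalso
              have hba : A.dir b a := (flipO_dir_cross hab).mp ha
              by_cases haS : a ∈ S
              · have hbS : b ∉ S := fun h => hab (iff_of_true haS h)
                obtain ⟨rfl, rfl⟩ := crossAdj hG hadj (A.adj_of_dir hba).symm haS hbS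
                exact A.asymm _ _ hAvu hba
              · have hbS : b ∈ S := by tauto
                obtain ⟨rfl, rfl⟩ := crossAdj hG hadj (A.adj_of_dir hba) hbS haS
                exact B.asymm _ _ hBuv hb
          · intro hDD
            have hmem : (v, u) ∈ D' := hDD ⟨hAvu, hBuv⟩
            have hcross : ¬(v ∈ S ↔ u ∈ S) := fun h => huS (h.mp hvS)
            have : A.dir u v := (flipO_dir_cross hcross).mp hmem.1
            exact A.asymm _ _ hAvu this
        have hlt : D'.ncard < n := hcard ▸ Set.ncard_lt_ncard hsub (Set.toFinite D)
        have := ih D'.ncard hlt A' B rfl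
        exact (qm_eq A A' heqv).trans this
  have hsub : Subsingleton (Quot R) := by
    constructor
    intro a b
    induction a using Quot.ind with
    | _ a =>
      induction b using Quot.ind with
      | _ b =>
        have ha : Quot.mk R a = qm a.1 := congrArg (Quot.mk R) (Subtype.ext rfl)
        have hb : Quot.mk R b = qm b.1 := congrArg (Quot.mk R) (Subtype.ext rfl)
        rw [ha, hb]
        exact conn _ a.1 b.1 rfl
  have hne : Nonempty (Quot R) := by
    let e := Fintype.equivFin V
    refine ⟨Quot.mk R ⟨⟨fun a b => G.Adj a b ∧ e a < e b, ?_, ?_⟩, ?_⟩⟩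
    · intro a b
      constructor
      · intro h
        rcases lt_or_gt_of_ne (fun hab : e a = e b => h.ne (e.injective hab)) with h' | h'
        · exact Or.inl ⟨h, h'⟩
        · exact Or.inr ⟨h.symm, h'⟩
      · rintro (⟨h, -⟩ | ⟨h, -⟩)
        · exact h
        · exact h.symm
    · rintro a b ⟨-, h1⟩ ⟨-, h2⟩
      exact absurd h2 (not_lt_of_gt h1)
    · exact orient_acyclic hG _
  rw [kappa, Nat.card_eq_one_iff_unique]
  exact ⟨hsub, hne⟩
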